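/- In the encoding ⟦M⟧_o of a linear lambda term M into BVQ structures, the set of free atom names of ⟦M⟧_o occurring positively is exactly the set of free variables of M, and each such name occurs exactly once. -/

import Mathlib

/-- Untyped lambda terms with named variables (names are natural numbers). -/
inductive Lam : Type
  | var : ℕ → Lam
  | lam : ℕ → Lam → Lam
  | app : Lam → Lam → Lam
deriving DecidableEq

namespace Lam

/-- Number of free occurrences of the variable `x` in a term. -/
def count (x : ℕ) : Lam → ℕ
  | var y => if y = x then 1 else 0
  | lam y M => if y = x then 0 else count x M
  | app M N => count x M + count x N

/-- Free variables of a term. -/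
def fv : Lam → Finset ℕ
  | var x => {x}
  | lam x M => fv M \ {x}
  | app M N => fv M ∪ fv N

/-- Bound variables of a term. -/
def bv : Lam → Finset ℕ
  | var _ => ∅
  | lam x M => insert x (bv M)
  | app M N => bv M ∪ bv N

/-- Substitution of `N` for the free occurrences of `x`. -/
def subst (x : ℕ) (N : Lam) : Lam → Lam
  | var y => if y = x then N else var y
  | lam y M => if y = x then lam y M else lam y (subst x N M)
  | app M P => app (subst x N M) (subst x N P)

/-- Size of a term: number of nodes of the syntax tree. -/
def size : Lam → ℕ
  | var _ => 1
  | lam _ M => 1 + size M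
  | app M N => 1 + size M + size N

/-- Number of lambda-abstractions in a term. -/
def numLam : Lam → ℕ
  | var _ => 0
  | lam _ M => 1 + numLam M
  | app M N => numLam M + numLam N

/-- Number of applications in a term. -/
def numApp : Lam → ℕ
  | var _ => 0
  | lam _ M => numApp M
  | app M N => 1 + numApp M + numApp N

/-- Number of variable occurrences in a term. -/
def numVar : Lam → ℕ
  | var _ => 1
  | lam _ M => numVar M
  | app M N => numVar M + numVar N

/-- `Linear X M` : `M` is a linear lambda term whose free variables are exactly `X`,
each occurring exactly once. -/
inductive Linear : Finset ℕ → Lam → Prop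
  | var (x : ℕ) : Linear {x} (var x)
  | lam {X : Finset ℕ} {x : ℕ} {M : Lam} (hx : x ∉ X) :
      Linear (insert x X) M → Linear X (lam x M)
  | app {X Y : Finset ℕ} {M N : Lam} (h : Disjoint X Y) :
      Linear X M → Linear Y N → Linear (X ∪ Y) (app M N)

/-- One-step beta-reduction: the contextual closure of `(λx.M)N → M[N/x]`. -/
inductive Step : Lam → Lam → Prop
  | beta (x : ℕ) (M N : Lam) : Step (app (lam x M) N) (subst x N M)
  | lam (x : ℕ) {M N : Lam} : Step M N → Step (lam x M) (lam x N)
  | appL {M N : Lam} (P : Lam) : Step M N → Step (app M P) (app N P)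
  | appR (P : Lam) {M N : Lam} : Step M N → Step (app P M) (app P N)

/-- The operational semantics `⇒` of the linear lambda calculus: reflexivity,
beta, transitivity, and congruence under abstraction and both application positions. -/
inductive Red : Lam → Lam → Prop
  | refl (M : Lam) : Red M M
  | beta (x : ℕ) (M N : Lam) : Red (app (lam x M) N) (subst x N M)
  | trans {M P N : Lam} : Red M P → Red P N → Red M N
  | lam (x : ℕ) {M N : Lam} : Red M N → Red (lam x M) (lam x N)
  | appL {M N : Lam} (P : Lam) : Red M N → Red (app M P) (app N P)
  | appR (P : Lam) {M N : Lam} : Red M N → Red (app P M) (app P N)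

/-- Alpha-equivalence of lambda terms. -/
inductive Alpha : Lam → Lam → Prop
  | var (x : ℕ) : Alpha (var x) (var x)
  | app {M M' N N' : Lam} : Alpha M M' → Alpha N N' → Alpha (app M N) (app M' N')
  | lam {x y : ℕ} {M M' : Lam} (z : ℕ)
      (hz : z ∉ fv M ∪ fv M' ∪ bv M ∪ bv M') :
      Alpha (subst x (var z) M) (subst y (var z) M') → Alpha (lam x M) (lam y M')

end Lam

/-- Structures of system BVQ: atoms and their negations, the unit, par, seq,
copar, and the self-dual quantifier binder `sdq`. -/
inductive Str : Type
  | one : Str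
  | pos : ℕ → Str
  | neg : ℕ → Str
  | par : Str → Str → Str
  | seq : Str → Str → Str
  | copar : Str → Str → Str
  | sdq : ℕ → Str → Str

namespace Str

/-- Number of free negative occurrences of atom name `a` in a structure. -/
def negCount (a : ℕ) : Str → ℕ
  | one => 0
  | pos _ => 0
  | neg b => if b = a then 1 else 0
  | par R T => negCount a R + negCount a T
  | seq R T => negCount a R + negCount a T
  | copar R T => negCount a R + negCount a T
  | sdq b R => if b = a then 0 else negCount a R

/-- Number of free positive occurrences of atom name `a` in a structure. -/
def posCount (a : ℕ) : Str → ℕ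
  | one => 0
  | pos b => if b = a then 1 else 0
  | neg _ => 0
  | par R T => posCount a R + posCount a T
  | seq R T => posCount a R + posCount a T
  | copar R T => posCount a R + posCount a T
  | sdq b R => if b = a then 0 else posCount a R

/-- Size of a structure: atoms, units, binary connectives and binders each count one. -/
def ssize : Str → ℕ
  | one => 1
  | pos _ => 1
  | neg _ => 1
  | par R T => 1 + ssize R + ssize T
  | seq R T => 1 + ssize R + ssize T
  | copar R T => 1 + ssize R + ssize T
  | sdq _ R => 1 + ssize R

end Str

/-- The encoding `⟦M⟧_o` of linear lambda terms into BVQ structures.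
Lambda variables `x` are coded by the even atom name `2*x`; fresh channel
names are odd, generated from a counter `c` (the returned counter bounds the
names used so far).  The clauses are:
`⟦x⟧_o = ⟨x ; ō⟩`, `⟦λx.M⟧_o = ∀x.⟦M⟧_o`,
`⟦M N⟧_o = ∃p.[⟦M⟧_p ; ∃q.⟦N⟧_q ; ⟨p ; ō⟩]` with `p`, `q` fresh. -/
def enc : Lam → ℕ → ℕ → Str × ℕ
  | .var x, o, c => (.seq (.pos (2*x)) (.neg o), c)
  | .lam x M, o, c =>
      let r := enc M o c
      (.sdq (2*x) r.1, r.2)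
  | .app M N, o, c =>
      let p := 2*c+1
      let q := 2*c+3
      let r1 := enc M p (c+2)
      let r2 := enc N q r1.2
      (.sdq p (.par r1.1 (.par (.sdq q r2.1) (.seq (.pos p) (.neg o)))), r2.2)

lemma linear_fv {X : Finset ℕ} {M : Lam} (hM : Lam.Linear X M) : M.fv = X := by
  induction hM with
  | var x => simp [Lam.fv]
  | lam hx _ ih =>
      simp only [Lam.fv, ih]
      rw [Finset.insert_sdiff_of_mem _ (Finset.mem_singleton_self _),
        Finset.sdiff_singleton_eq_erase, Finset.erase_eq_of_notMem hx]
  | app h _ _ ih1 ih2 => simp [Lam.fv, ih1, ih2]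

lemma enc_posCount {X : Finset ℕ} {M : Lam} (hM : Lam.Linear X M) :
    ∀ a o c, Str.posCount a (enc M o c).1 =
      if a ∈ X.image (fun x => 2 * x) then 1 else 0 := by
  induction hM with
  | var x =>
      intro a o c
      simp only [enc, Str.posCount, Finset.image_singleton, Finset.mem_singleton]
      by_cases h : 2 * x = a
      · simp [h]
      · simp [h, show ¬ a = 2 * x from fun hh => h hh.symm]
  | @lam X x M hx _ ih =>
      intro a o c
      simp only [enc, Str.posCount]
      by_cases h : 2 * x = a
      · subst h
        have : (2 * x) ∉ X.image (fun x => 2 * x) := by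
          simp only [Finset.mem_image, not_exists]
          intro y h
          have : y = x := by omega
          exact hx (this ▸ h.1)
        simp [this]
      · rw [if_neg h, ih]
        have : a ∈ (insert x X).image (fun x => 2 * x) ↔
            a ∈ X.image (fun x => 2 * x) := by
          simp only [Finset.image_insert, Finset.mem_insert]
          constructor
          · rintro (rfl | hm)
            · exact absurd rfl h
            · exact hm
          · exact Or.inr
        rw [if_congr this rfl rfl]
  | @app X Y M N hdis _ _ ih1 ih2 =>
      intro a o c
      have hodd : ∀ b : ℕ, Odd b → b ∉ X.image (fun x => 2 * x) ∧
          b ∉ Y.image (fun x => 2 * x) := by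
        intro b hb
        constructor <;>
        · simp only [Finset.mem_image, not_exists]
          intro y h
          obtain ⟨-, rfl⟩ := h
          exact (Nat.not_odd_iff_even.mpr ⟨y, by omega⟩) hb
      simp only [enc, Str.posCount]
      by_cases hp : 2 * c + 1 = a
      · subst hp
        rw [if_pos rfl]
        have := hodd (2*c+1) ⟨c, by omega⟩
        simp [Finset.image_union, this.1, this.2]
      · rw [if_neg hp, ih1]
        by_cases hq : 2 * c + 3 = a
        · subst hq
          rw [if_pos rfl]
          have := hodd (2*c+3) ⟨c+1, by omega⟩
          simp [Finset.image_union, this.1, this.2]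
        · rw [if_neg hq, ih2, if_neg hp]
          have himdis : Disjoint (X.image (fun x => 2 * x))
              (Y.image (fun x => 2 * x)) := by
            rw [Finset.disjoint_left] at hdis ⊢
            intro b hb hb'
            obtain ⟨y, hy, rfl⟩ := Finset.mem_image.mp hb
            obtain ⟨z, hz, hz2⟩ := Finset.mem_image.mp hb'
            have : z = y := by omega
            exact hdis hy (this ▸ hz)
          rw [Finset.image_union]
          by_cases hX : a ∈ X.image (fun x => 2 * x)
          · have hY : a ∉ Y.image (fun x => 2 * x) :=
              Finset.disjoint_left.mp himdis hX
            simp [hX, hY]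
          · by_cases hY : a ∈ Y.image (fun x => 2 * x) <;> simp [hX, hY]

open Lam in
/-- The free atom names occurring positively in `⟦M⟧_o` are exactly the
(codes of the) free variables of `M`, each occurring exactly once. -/
theorem enc_pos_free {X : Finset ℕ} {M : Lam} {o c : ℕ}
    (hM : Linear X M) (ho : Odd o) (hc : o < 2 * c + 1) :
    (∀ x ∈ fv M, Str.posCount (2 * x) (enc M o c).1 = 1) ∧
    (∀ a : ℕ, (¬ ∃ x ∈ fv M, a = 2 * x) → Str.posCount a (enc M o c).1 = 0) := by
  rw [linear_fv hM]
  constructor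
  · intro x hx
    rw [enc_posCount hM, if_pos]
    exact Finset.mem_image.mpr ⟨x, hx, rfl⟩
  · intro a ha
    rw [enc_posCount hM, if_neg]
    intro h
    obtain ⟨y, hy, rfl⟩ := Finset.mem_image.mp h
    exact ha ⟨y, hy, rfl⟩
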